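/- Let w : ℝ → (0,∞) be continuous and bounded, and let x ∈ L²_w(ℝ) be such that w·x is locally absolutely continuous on ℝ and its almost-everywhere derivative (w·x)′ belongs to L²_w(ℝ). Then w·x vanishes at infinity: lim_{ξ→+∞} (w·x)(ξ) = 0 and lim_{ξ→−∞} (w·x)(ξ) = 0. -/

import Mathlib

open MeasureTheory Filter Set Topology
open scoped ComplexConjugate

lemma aux_key (g : ℝ → ℂ) (a b : ℝ) (hab : a ≤ b)
    (hg : IntegrableOn g (Ioc a b))
    (hφg : IntegrableOn (fun t => conj (∫ s in Ioc a t, g s) * g t) (Ioc a b)) :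
    2 * (∫ t in Ioc a b, conj (∫ s in Ioc a t, g s) * g t).re
      = ‖∫ s in Ioc a b, g s‖ ^ 2 := by
  set φ : ℝ → ℂ := fun t => ∫ s in Ioc a t, g s with hφdef
  set J : ℂ := ∫ t in Ioc a b, conj (φ t) * g t with hJ
  have hgm : AEStronglyMeasurable g (volume.restrict (Ioc a b)) := hg.aestronglyMeasurable
  -- measurability of the triangle
  have hmeasset : MeasurableSet {p : ℝ × ℝ | p.2 ≤ p.1} :=
    measurableSet_le measurable_snd measurable_fst
  have h1 : AEStronglyMeasurable (fun p : ℝ × ℝ => g p.2 * conj (g p.1))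
      ((volume.restrict (Ioc a b)).prod (volume.restrict (Ioc a b))) := by
    have hc : AEStronglyMeasurable (fun p : ℝ × ℝ => conj (g p.1))
        ((volume.restrict (Ioc a b)).prod (volume.restrict (Ioc a b))) := by
      exact (continuous_star.comp_aestronglyMeasurable hgm.comp_fst)
    exact hgm.comp_snd.mul hc
  have hF_aesm : AEStronglyMeasurable
      (fun p : ℝ × ℝ => if p.2 ≤ p.1 then g p.2 * conj (g p.1) else 0)
      ((volume.restrict (Ioc a b)).prod (volume.restrict (Ioc a b))) := by
    have := h1.indicator hmeasset
    convert this using 1; funext p; simp [Set.indicator_apply]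
  have hFint : Integrable (fun p : ℝ × ℝ => if p.2 ≤ p.1 then g p.2 * conj (g p.1) else 0)
      ((volume.restrict (Ioc a b)).prod (volume.restrict (Ioc a b))) := by
    have hb : Integrable (fun p : ℝ × ℝ => ‖g p.1‖ * ‖g p.2‖)
        ((volume.restrict (Ioc a b)).prod (volume.restrict (Ioc a b))) :=
      hg.norm.mul_prod hg.norm
    refine hb.mono' hF_aesm (ae_of_all _ fun p => ?_)
    by_cases h : p.2 ≤ p.1 <;> simp [h, mul_comm] <;> positivity
  have hswap := MeasureTheory.integral_integral_swap
    (f := fun t s : ℝ => if s ≤ t then g s * conj (g t) else 0)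
    (μ := volume.restrict (Ioc a b)) (ν := volume.restrict (Ioc a b))
    (by exact hFint)
  -- identify left side
  have hL : (∫ t in Ioc a b, ∫ s in Ioc a b, if s ≤ t then g s * conj (g t) else 0)
      = ∫ t in Ioc a b, φ t * conj (g t) := by
    refine setIntegral_congr_fun measurableSet_Ioc fun t ht => ?_
    have heq : (fun s => if s ≤ t then g s * conj (g t) else 0)
        = fun s => (Iic t).indicator g s * conj (g t) := by
      funext s; by_cases h : s ≤ t <;> simp [Set.indicator_apply, h]
    rw [heq, integral_mul_const, integral_indicator measurableSet_Iic,
        Measure.restrict_restrict measurableSet_Iic, Set.inter_comm,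
        Set.Ioc_inter_Iic, min_eq_right ht.2]
  -- identify right side
  have hsplit : ∀ s ∈ Ioc a b, (∫ t in Ioc s b, g t) = φ b - φ s := by
    intro s hs
    have hunion : (∫ t in Ioc a b, g t) = (∫ t in Ioc a s, g t) + ∫ t in Ioc s b, g t := by
      rw [← setIntegral_union (Set.Ioc_disjoint_Ioc_of_le le_rfl) measurableSet_Ioc
          (hg.mono_set (Set.Ioc_subset_Ioc le_rfl hs.2))
          (hg.mono_set (Set.Ioc_subset_Ioc hs.1.le le_rfl)),
        Set.Ioc_union_Ioc_eq_Ioc hs.1.le hs.2]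
    simp only [hφdef]
    linear_combination -hunion
  have hR : (∫ s in Ioc a b, ∫ t in Ioc a b, if s ≤ t then g s * conj (g t) else 0)
      = ∫ s in Ioc a b, g s * (conj (φ b) - conj (φ s)) := by
    refine setIntegral_congr_fun measurableSet_Ioc fun s hs => ?_
    have heq : (fun t => if s ≤ t then g s * conj (g t) else 0)
        = fun t => g s * (Ici s).indicator (fun t => conj (g t)) t := by
      funext t; by_cases h : s ≤ t <;> simp [Set.indicator_apply, h]
    rw [heq, integral_const_mul, integral_indicator measurableSet_Ici,
        Measure.restrict_restrict measurableSet_Ici]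
    have hset : Ici s ∩ Ioc a b = Icc s b := by
      ext t
      simp only [Set.mem_inter_iff, Set.mem_Ici, Set.mem_Ioc, Set.mem_Icc]
      exact ⟨fun h => ⟨h.1, h.2.2⟩, fun h => ⟨h.1, lt_of_lt_of_le hs.1 h.1, h.2⟩⟩
    rw [hset, integral_Icc_eq_integral_Ioc]
    have : (∫ t in Ioc s b, conj (g t)) = conj (φ b) - conj (φ s) := by
      rw [integral_conj, hsplit s hs, map_sub]
    rw [this]
  -- conclude
  have hgφ' : Integrable (fun s => g s * conj (φ s)) (volume.restrict (Ioc a b)) := by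
    have : (fun s => g s * conj (φ s)) = fun s => conj (φ s) * g s := by
      funext s; ring
    rw [this]; exact hφg
  have hconjJ : conj J = φ b * conj (φ b) - J := by
    have h1 : conj J = ∫ t in Ioc a b, φ t * conj (g t) := by
      rw [hJ, ← integral_conj]
      congr 1; funext t; simp [mul_comm]
    calc conj J = ∫ t in Ioc a b, φ t * conj (g t) := h1
      _ = ∫ s in Ioc a b, g s * (conj (φ b) - conj (φ s)) := by rw [← hL, hswap, hR]
      _ = (∫ s in Ioc a b, g s * conj (φ b)) - ∫ s in Ioc a b, g s * conj (φ s) := by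
          rw [← integral_sub (hg.mul_const _) hgφ']
          congr 1; funext s; ring
      _ = φ b * conj (φ b) - J := by
          rw [integral_mul_const, hJ]
          have heq2 : (∫ s in Ioc a b, g s * conj (φ s)) = ∫ s in Ioc a b, conj (φ s) * g s := by
            congr 1; funext s; ring
          rw [heq2]
  have hsum : (↑(2 * J.re) : ℂ) = ↑(Complex.normSq (φ b)) := by
    rw [← Complex.add_conj, ← Complex.mul_conj, hconjJ]; ring
  have h2 : 2 * J.re = Complex.normSq (φ b) := by exact_mod_cast hsum
  rw [show ‖∫ s in Ioc a b, g s‖ ^ 2 = Complex.normSq (φ b) by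
    rw [hφdef]; rw [← Complex.sq_norm]]
  exact h2

private lemma normsq_expand (z p : ℂ) : ‖z + p‖ ^ 2 = ‖z‖ ^ 2 + ‖p‖ ^ 2 + 2 * (conj z * p).re := by
  simp only [Complex.sq_norm, Complex.normSq_apply, Complex.add_re,
    Complex.add_im, Complex.mul_re, Complex.conj_re, Complex.conj_im]
  ring

private lemma aux_zero {F ψ : ℝ → ℝ} {L : ℝ} {l : Filter ℝ} [l.NeBot]
    (hψ : Integrable ψ)
    (hbig : ∀ s : Set ℝ, s ∈ l → volume s = ⊤)
    (hle : ∀ ξ, F ξ ≤ ψ ξ) (h0 : ∀ ξ, 0 ≤ F ξ)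
    (htend : Tendsto F l (𝓝 L)) : L = 0 := by
  by_contra hL
  have hL0 : 0 ≤ L := ge_of_tendsto' htend h0
  have hLpos : 0 < L := lt_of_le_of_ne hL0 (Ne.symm hL)
  have hev : ∀ᶠ ξ in l, L / 2 ≤ F ξ := htend.eventually_const_le (by linarith)
  have hmem : {ξ : ℝ | L / 2 ≤ ψ ξ} ∈ l :=
    Filter.mem_of_superset hev fun ξ h => le_trans h (hle ξ)
  have h2 : volume {ξ : ℝ | L / 2 ≤ ψ ξ} < ⊤ := hψ.measure_ge_lt_top (by linarith)
  rw [hbig _ hmem] at h2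
  exact absurd h2 (lt_irrefl _)

/-- If `w` is moreover bounded, then `w·x` vanishes at `±∞`. -/
theorem stmt_2 (w : ℝ → ℝ) (hw_cont : Continuous w) (hw_pos : ∀ ξ, 0 < w ξ)
    (hw_bdd : ∃ M : ℝ, ∀ ξ : ℝ, w ξ ≤ M)
    (x g : ℝ → ℂ)
    (hx_meas : AEStronglyMeasurable x volume)
    (hx : Integrable fun ξ => w ξ * ‖x ξ‖ ^ 2)
    (hg_loc : LocallyIntegrable g)
    (hg : Integrable fun ξ => w ξ * ‖g ξ‖ ^ 2)
    (hFTC : ∀ a b : ℝ, (w b : ℂ) * x b - (w a : ℂ) * x a = ∫ ζ in a..b, g ζ) :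
    Tendsto (fun ξ : ℝ => (w ξ : ℂ) * x ξ) atTop (𝓝 0) ∧
    Tendsto (fun ξ : ℝ => (w ξ : ℂ) * x ξ) atBot (𝓝 0) := by
  obtain ⟨M, hM⟩ := hw_bdd
  set u : ℝ → ℂ := fun ξ => (w ξ : ℂ) * x ξ with hu
  have hgi : ∀ a b : ℝ, IntegrableOn g (Ioc a b) := fun a b =>
    (hg_loc.integrableOn_isCompact isCompact_Icc).mono_set Ioc_subset_Icc_self
  have hint : ∀ a b : ℝ, IntervalIntegrable g volume a b := fun a b => ⟨hgi a b, hgi b a⟩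
  have hu_eq : ∀ t, u t = u 0 + ∫ ζ in (0:ℝ)..t, g ζ := fun t => by
    have h := hFTC 0 t
    rw [hu]
    linear_combination h
  have hu_cont : Continuous u := by
    rw [show u = fun t => u 0 + ∫ ζ in (0:ℝ)..t, g ζ from funext hu_eq]
    exact continuous_const.add (intervalIntegral.continuous_primitive hint 0)
  have hg_meas : AEStronglyMeasurable g volume := hg_loc.aestronglyMeasurable
  set D : ℝ → ℝ := fun t => 2 * (conj (u t) * g t).re with hD
  have hu_norm : ∀ t, ‖u t‖ = w t * ‖x t‖ := fun t => by
    rw [hu]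
    simp [norm_mul, Complex.norm_real, abs_of_pos (hw_pos t)]
  have hD_bound : ∀ t, |D t| ≤ w t * ‖x t‖ ^ 2 + w t * ‖g t‖ ^ 2 := fun t => by
    have habs : |(conj (u t) * g t).re| ≤ ‖u t‖ * ‖g t‖ := by
      calc |(conj (u t) * g t).re| ≤ ‖conj (u t) * g t‖ :=
            Complex.abs_re_le_norm _
        _ = ‖u t‖ * ‖g t‖ := by rw [norm_mul, Complex.norm_conj]
    have h1 : |D t| ≤ 2 * (‖u t‖ * ‖g t‖) := by
      rw [hD, abs_mul]
      simp only [abs_two]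
      linarith
    have h2 : 2 * (‖u t‖ * ‖g t‖) ≤ w t * ‖x t‖ ^ 2 + w t * ‖g t‖ ^ 2 := by
      rw [hu_norm t]
      have hw := (hw_pos t).le
      nlinarith [sq_nonneg (‖x t‖ - ‖g t‖), norm_nonneg (x t), norm_nonneg (g t)]
    linarith
  have hD_meas : AEStronglyMeasurable D volume := by
    have h1 : AEStronglyMeasurable (fun t => conj (u t) * g t) volume :=
      ((continuous_star.comp hu_cont).aestronglyMeasurable).mul hg_meas
    have h2 : AEStronglyMeasurable (fun t => (conj (u t) * g t).re) volume :=
      Complex.continuous_re.comp_aestronglyMeasurable h1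
    exact h2.const_mul 2
  have hρ : Integrable (fun t => w t * ‖x t‖ ^ 2 + w t * ‖g t‖ ^ 2) := hx.add hg
  have hD_int : Integrable D := by
    refine hρ.mono' hD_meas (ae_of_all _ fun t => ?_)
    rw [Real.norm_eq_abs]
    exact hD_bound t
  have hcu_int : ∀ a b : ℝ, IntegrableOn (fun t => conj (u t) * g t) (Ioc a b) := fun a b => by
    have h : IntegrableOn (fun t => conj (u t) * g t) (Icc a b) :=
      IntegrableOn.continuousOn_mul ((continuous_star.comp hu_cont).continuousOn)
        (hg_loc.integrableOn_isCompact isCompact_Icc) isCompact_Icc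
    exact h.mono_set Ioc_subset_Icc_self
  have hdiff : ∀ a b : ℝ, a ≤ b → ‖u b‖ ^ 2 - ‖u a‖ ^ 2 = ∫ t in Ioc a b, D t := by
    intro a b hab
    have hphi : ∀ t, a ≤ t → (∫ s in Ioc a t, g s) = u t - u a := fun t ht => by
      rw [← intervalIntegral.integral_of_le ht, ← hFTC a t]
    have hφg : IntegrableOn (fun t => conj (∫ s in Ioc a t, g s) * g t) (Ioc a b) := by
      refine IntegrableOn.congr_fun
        ((hcu_int a b).sub ((hgi a b).const_mul (conj (u a))))
        (fun t ht => ?_) measurableSet_Ioc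
      rw [hphi t ht.1.le, map_sub]
      simp only [Pi.sub_apply]
      ring
    have hkey := aux_key g a b hab (hgi a b) hφg
    have hsplit2 : (∫ t in Ioc a b, conj (∫ s in Ioc a t, g s) * g t)
        = (∫ t in Ioc a b, conj (u t) * g t) - conj (u a) * ∫ t in Ioc a b, g t := by
      rw [← integral_const_mul, ← integral_sub (hcu_int a b) ((hgi a b).const_mul _)]
      refine setIntegral_congr_fun measurableSet_Ioc fun t ht => ?_
      rw [hphi t ht.1.le, map_sub]; ring
    rw [hsplit2, hphi b hab] at hkey
    set S : ℂ := ∫ t in Ioc a b, conj (u t) * g t with hS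
    have hDint' : (∫ t in Ioc a b, D t) = 2 * S.re := by
      have h1 : (∫ t in Ioc a b, D t) = 2 * ∫ t in Ioc a b, (conj (u t) * g t).re := by
        simp only [hD]
        exact integral_const_mul 2 _
      rw [h1, hS]
      congr 1
      have h2 := integral_re (hcu_int a b)
      simpa using h2
    have hexp : ‖u b‖ ^ 2 = ‖u a‖ ^ 2 + ‖u b - u a‖ ^ 2
        + 2 * (conj (u a) * (u b - u a)).re := by
      have h3 := normsq_expand (u a) (u b - u a)
      have h0 : u a + (u b - u a) = u b := by ring
      rw [h0] at h3
      exact h3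
    have hre : 2 * S.re = ‖u b - u a‖ ^ 2 + 2 * (conj (u a) * (u b - u a)).re := by
      rw [Complex.sub_re] at hkey
      linarith
    rw [hDint']
    linarith
  have hF_eq : ∀ ξ : ℝ, ‖u ξ‖ ^ 2 = ‖u 0‖ ^ 2 + ∫ t in (0:ℝ)..ξ, D t := by
    intro ξ
    rcases le_total 0 ξ with h | h
    · rw [intervalIntegral.integral_of_le h]
      have := hdiff 0 ξ h
      linarith
    · rw [intervalIntegral.integral_symm, intervalIntegral.integral_of_le h]
      have := hdiff ξ 0 h
      linarith
  have hψ_int : Integrable (fun ξ => M * (w ξ * ‖x ξ‖ ^ 2)) := hx.const_mul M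
  have hFle : ∀ ξ, ‖u ξ‖ ^ 2 ≤ M * (w ξ * ‖x ξ‖ ^ 2) := fun ξ => by
    rw [hu_norm ξ, mul_pow]
    have hw := hw_pos ξ
    have hMw := hM ξ
    nlinarith [mul_le_mul_of_nonneg_right hMw (mul_nonneg hw.le (sq_nonneg ‖x ξ‖))]
  have hF0 : ∀ ξ, (0:ℝ) ≤ ‖u ξ‖ ^ 2 := fun ξ => sq_nonneg _
  have hbig_top : ∀ s : Set ℝ, s ∈ (atTop : Filter ℝ) → volume s = ⊤ := by
    intro s hs
    obtain ⟨T, hT⟩ := Filter.mem_atTop_sets.mp hs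
    have : Ici T ⊆ s := fun y hy => hT y hy
    have h1 : volume (Ici T) ≤ volume s := measure_mono this
    rw [Real.volume_Ici] at h1
    exact top_le_iff.mp h1
  have hbig_bot : ∀ s : Set ℝ, s ∈ (atBot : Filter ℝ) → volume s = ⊤ := by
    intro s hs
    obtain ⟨T, hT⟩ := Filter.mem_atBot_sets.mp hs
    have : Iic T ⊆ s := fun y hy => hT y hy
    have h1 : volume (Iic T) ≤ volume s := measure_mono this
    rw [Real.volume_Iic] at h1
    exact top_le_iff.mp h1
  -- atTop
  have htop : Tendsto (fun ξ => ‖u ξ‖ ^ 2) atTop (𝓝 (‖u 0‖ ^ 2 + ∫ t in Ioi (0:ℝ), D t)) := by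
    have h1 := intervalIntegral_tendsto_integral_Ioi 0 hD_int.integrableOn
      (tendsto_id (α := ℝ))
    have h2 := (tendsto_const_nhds (x := ‖u 0‖ ^ 2) (f := (atTop : Filter ℝ))).add h1
    simpa only [← hF_eq, id] using h2
  have hbot : Tendsto (fun ξ => ‖u ξ‖ ^ 2) atBot (𝓝 (‖u 0‖ ^ 2 - ∫ t in Iic (0:ℝ), D t)) := by
    have h1 := intervalIntegral_tendsto_integral_Iic 0 hD_int.integrableOn
      (tendsto_id (α := ℝ))
    have h2 := (tendsto_const_nhds (x := ‖u 0‖ ^ 2) (f := (atBot : Filter ℝ))).sub h1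
    have h3 : ∀ ξ : ℝ, ‖u ξ‖ ^ 2 = ‖u 0‖ ^ 2 - ∫ t in ξ..(0:ℝ), D t := by
      intro ξ
      rw [hF_eq ξ, intervalIntegral.integral_symm]
      ring
    simpa only [← h3, id] using h2
  have hLtop : ‖u 0‖ ^ 2 + (∫ t in Ioi (0:ℝ), D t) = 0 :=
    aux_zero hψ_int hbig_top hFle hF0 htop
  have hLbot : ‖u 0‖ ^ 2 - (∫ t in Iic (0:ℝ), D t) = 0 :=
    aux_zero hψ_int hbig_bot hFle hF0 hbot
  rw [hLtop] at htop
  rw [hLbot] at hbot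
  constructor
  · rw [tendsto_zero_iff_norm_tendsto_zero]
    have hsq := (Real.continuous_sqrt.tendsto 0).comp htop
    simp only [Function.comp_def, Real.sqrt_sq (norm_nonneg _), Real.sqrt_zero] at hsq
    exact hsq
  · rw [tendsto_zero_iff_norm_tendsto_zero]
    have hsq := (Real.continuous_sqrt.tendsto 0).comp hbot
    simp only [Function.comp_def, Real.sqrt_sq (norm_nonneg _), Real.sqrt_zero] at hsq
    exact hsq
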